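/- Under the assumptions that each potential Gₚ satisfies sup_{x,y} Gₚ(x)/Gₚ(y) ≤ δ and each Markov kernel Mₚᵏ satisfies Mₚᵏ(x,·) ≥ ε·Mₚᵏ(y,·) for all x,y (with ε ∈ (0,1), δ ∈ [1,∞)), the normalized semigroup Φ_{s,t}ᵏ of the Feynman–Kac flow satisfies the uniform stability estimate: for any 0 ≤ s < t and any probability measures μ, ρ on E_{s-1}, ‖Φ_{s,t}ᵏ(μ) − Φ_{s,t}ᵏ(ρ)‖_tv ≤ 2·(δ/ε)²·(1−ε²)^{t−s}·‖μ − ρ‖_tv. -/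

import Mathlib

set_option linter.unusedSectionVars false


open MeasureTheory ProbabilityTheory

/-- Total variation distance as the supremum over measurable sets. -/
noncomputable def tvDist {E : Type*} [MeasurableSpace E] (μ ρ : Measure E) : ℝ :=
  ⨆ A : {s : Set E // MeasurableSet s}, |(μ A).toReal - (ρ A).toReal|

/-- One selection–mutation step of a Feynman–Kac flow:
`Φ(μ) = (μ(G))⁻¹ · (G·μ) M`, i.e. reweighting by the potential `G` followed by the
Markov transition `M`. -/
noncomputable def fkStep {E : Type*} [MeasurableSpace E] (G : E → ℝ) (M : Kernel E E)
    (μ : Measure E) : Measure E :=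
  ((∫⁻ x, ENNReal.ofReal (G x) ∂μ)⁻¹ •
    μ.withDensity (fun x => ENNReal.ofReal (G x))).bind (fun x => M x)

/-- The normalized Feynman–Kac semigroup `Φ_{s,s+n} = Φ_{s+n} ∘ ⋯ ∘ Φ_{s+1}`, where
`Φ_p` uses potential `G_{p-1}` and kernel `M_p`. -/
noncomputable def fkIter {E : Type*} [MeasurableSpace E] (G : ℕ → E → ℝ)
    (M : ℕ → Kernel E E) (s : ℕ) : ℕ → Measure E → Measure E
  | 0, μ => μ
  | n + 1, μ => fkStep (G (s + n)) (M (s + n + 1)) (fkIter G M s n μ)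

/-! ### Auxiliary development -/

namespace FKStability

open ENNReal Set

variable {E : Type*} [MeasurableSpace E]

/-- The unnormalized Feynman–Kac "heat kernel" acting on indicator data:
`fkPsi s n A x = Q_{s+1} ⋯ Q_{s+n} 1_A (x)` where `Q_p(x,dy) = G_{p-1}(x) M_p(x,dy)`. -/
noncomputable def fkPsi (G : ℕ → E → ℝ) (M : ℕ → Kernel E E) :
    ℕ → ℕ → Set E → E → ℝ≥0∞
  | _, 0, A => A.indicator 1
  | s, n + 1, A => fun x =>
      ENNReal.ofReal (G s x) * ∫⁻ y, fkPsi G M (s + 1) n A y ∂(M (s + 1) x)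

section Basic

variable (G : ℕ → E → ℝ) (M : ℕ → Kernel E E) [∀ p, IsMarkovKernel (M p)]

lemma fkPsi_zero (s : ℕ) (A : Set E) : fkPsi G M s 0 A = A.indicator 1 := rfl

lemma fkPsi_succ (s n : ℕ) (A : Set E) (x : E) :
    fkPsi G M s (n + 1) A x
      = ENNReal.ofReal (G s x) * ∫⁻ y, fkPsi G M (s + 1) n A y ∂(M (s + 1) x) := rfl

lemma fkPsi_measurable (hGm : ∀ p, Measurable (G p)) :
    ∀ (n s : ℕ) (A : Set E), MeasurableSet A → Measurable (fkPsi G M s n A)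
  | 0, s, A, hA => measurable_one.indicator hA
  | n + 1, s, A, hA => by
      have IH := fkPsi_measurable hGm n (s + 1) A hA
      exact ((hGm s).ennreal_ofReal).mul
        (Measurable.lintegral_kernel_prod_right' (IH.comp measurable_snd))

lemma fkPsi_le_univ : ∀ (n s : ℕ) (A : Set E) (x : E),
    fkPsi G M s n A x ≤ fkPsi G M s n Set.univ x
  | 0, s, A, x => by
      classical
      by_cases hx : x ∈ A <;> simp [fkPsi, Set.indicator_apply, hx]
  | n + 1, s, A, x => by
      simp only [fkPsi]
      exact mul_le_mul_right (lintegral_mono fun y => fkPsi_le_univ n (s + 1) A y) _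

end Basic

section Bounds

variable (G : ℕ → E → ℝ) (M : ℕ → Kernel E E) [∀ p, IsMarkovKernel (M p)]
variable {δ ε : ℝ}

/-- helper: a lower bound by a constant for a lintegral against a probability measure. -/
lemma const_le_lintegral {μ : Measure E} [IsProbabilityMeasure μ] {f : E → ℝ≥0∞} {c : ℝ≥0∞}
    (h : ∀ x, c ≤ f x) : c ≤ ∫⁻ x, f x ∂μ := by
  calc c = ∫⁻ _, c ∂μ := by simp [lintegral_const]
    _ ≤ ∫⁻ x, f x ∂μ := lintegral_mono h

lemma lintegral_le_const' {μ : Measure E} [IsProbabilityMeasure μ] {f : E → ℝ≥0∞} {c : ℝ≥0∞}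
    (h : ∀ x, f x ≤ c) : ∫⁻ x, f x ∂μ ≤ c := by
  calc ∫⁻ x, f x ∂μ ≤ ∫⁻ _, c ∂μ := lintegral_mono h
    _ = c := by simp [lintegral_const]

lemma fkPsi_univ_bounds [Nonempty E]
    (hGpos : ∀ p x, 0 < G p x) (hGb : ∀ p, ∃ C : ℝ, ∀ x, G p x ≤ C)
    (hδ : 1 ≤ δ) (hG : ∀ p x y, G p x ≤ δ * G p y) :
    ∀ (n s : ℕ), ∃ c C : ℝ≥0∞, 0 < c ∧ C ≠ ⊤ ∧
      ∀ x, fkPsi G M s n Set.univ x ∈ Set.Icc c C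
  | 0, s => ⟨1, 1, zero_lt_one, one_ne_top, fun x => by simp [fkPsi]⟩
  | n + 1, s => by
      obtain ⟨c, C, hc, hC, hcC⟩ := fkPsi_univ_bounds hGpos hGb hδ hG n (s + 1)
      obtain ⟨x₀⟩ := (inferInstance : Nonempty E)
      obtain ⟨Cs, hCs⟩ := hGb s
      have hδ0 : (0 : ℝ) < δ := lt_of_lt_of_le one_pos hδ
      refine ⟨ENNReal.ofReal (G s x₀ / δ) * c, ENNReal.ofReal Cs * C, ?_, ?_, fun x => ⟨?_, ?_⟩⟩
      · exact ENNReal.mul_pos (ENNReal.ofReal_pos.2 (div_pos (hGpos s x₀) hδ0)).ne' hc.ne'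
      · exact ENNReal.mul_ne_top ENNReal.ofReal_ne_top hC
      · have h1 : ENNReal.ofReal (G s x₀ / δ) ≤ ENNReal.ofReal (G s x) := by
          refine ENNReal.ofReal_le_ofReal ?_
          rw [div_le_iff₀ hδ0]
          calc G s x₀ ≤ δ * G s x := hG s x₀ x
            _ = G s x * δ := mul_comm _ _
        have h2 : c ≤ ∫⁻ y, fkPsi G M (s + 1) n Set.univ y ∂(M (s + 1) x) :=
          const_le_lintegral fun y => (hcC y).1
        exact mul_le_mul' h1 h2
      · have h1 : ENNReal.ofReal (G s x) ≤ ENNReal.ofReal Cs :=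
          ENNReal.ofReal_le_ofReal (hCs x)
        have h2 : ∫⁻ y, fkPsi G M (s + 1) n Set.univ y ∂(M (s + 1) x) ≤ C :=
          lintegral_le_const' fun y => (hcC y).2
        exact mul_le_mul' h1 h2

lemma kernel_lintegral_min
    (hM : ∀ (p : ℕ) (x y : E) (A : Set E), MeasurableSet A →
      ENNReal.ofReal ε * M p y A ≤ M p x A)
    (p : ℕ) (x y : E) (f : E → ℝ≥0∞) :
    ENNReal.ofReal ε * ∫⁻ z, f z ∂(M p y) ≤ ∫⁻ z, f z ∂(M p x) := by
  have hle : (ENNReal.ofReal ε) • (M p y : Measure E) ≤ (M p x : Measure E) := by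
    refine Measure.le_iff.2 fun s hs => ?_
    simpa [Measure.smul_apply, smul_eq_mul] using hM p x y s hs
  calc ENNReal.ofReal ε * ∫⁻ z, f z ∂(M p y)
      = ∫⁻ z, f z ∂((ENNReal.ofReal ε) • (M p y : Measure E)) := by
        rw [lintegral_smul_measure, smul_eq_mul]
    _ ≤ ∫⁻ z, f z ∂(M p x) := lintegral_mono' hle le_rfl

lemma fkPsi_univ_ratio (hε : ε ∈ Set.Ioo (0:ℝ) 1) (hδ : 1 ≤ δ)
    (hG : ∀ p x y, G p x ≤ δ * G p y)
    (hM : ∀ (p : ℕ) (x y : E) (A : Set E), MeasurableSet A →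
      ENNReal.ofReal ε * M p y A ≤ M p x A)
    (n s : ℕ) (x y : E) :
    fkPsi G M s n Set.univ x
      ≤ (ENNReal.ofReal δ * (ENNReal.ofReal ε)⁻¹) * fkPsi G M s n Set.univ y := by
  have he0 : ENNReal.ofReal ε ≠ 0 := (ENNReal.ofReal_pos.2 hε.1).ne'
  have hd1 : (1 : ℝ≥0∞) ≤ ENNReal.ofReal δ := by
    rw [← ENNReal.ofReal_one]; exact ENNReal.ofReal_le_ofReal hδ
  have hei1 : (1 : ℝ≥0∞) ≤ (ENNReal.ofReal ε)⁻¹ := by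
    rw [ENNReal.one_le_inv]
    exact ENNReal.ofReal_le_one.2 hε.2.le
  cases n with
  | zero =>
      simp only [fkPsi, Set.indicator_univ]
      calc (1 : ℝ≥0∞) = 1 * 1 := (one_mul 1).symm
        _ ≤ ENNReal.ofReal δ * (ENNReal.ofReal ε)⁻¹ := mul_le_mul' hd1 hei1
        _ = (ENNReal.ofReal δ * (ENNReal.ofReal ε)⁻¹) * 1 := (mul_one _).symm
  | succ n =>
      simp only [fkPsi]
      have h1 : ENNReal.ofReal (G s x) ≤ ENNReal.ofReal δ * ENNReal.ofReal (G s y) := by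
        rw [← ENNReal.ofReal_mul (le_trans zero_le_one hδ)]
        exact ENNReal.ofReal_le_ofReal (hG s x y)
      have h2 : ∫⁻ z, fkPsi G M (s + 1) n Set.univ z ∂(M (s + 1) x)
          ≤ (ENNReal.ofReal ε)⁻¹ * ∫⁻ z, fkPsi G M (s + 1) n Set.univ z ∂(M (s + 1) y) := by
        have := kernel_lintegral_min M (ε := ε) hM (s + 1) y x
          (fkPsi G M (s + 1) n Set.univ)
        calc ∫⁻ z, fkPsi G M (s + 1) n Set.univ z ∂(M (s + 1) x)
            = (ENNReal.ofReal ε)⁻¹ *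
              (ENNReal.ofReal ε * ∫⁻ z, fkPsi G M (s + 1) n Set.univ z ∂(M (s + 1) x)) := by
              rw [← mul_assoc, ENNReal.inv_mul_cancel he0 ENNReal.ofReal_ne_top, one_mul]
          _ ≤ _ := mul_le_mul_right this _
      calc ENNReal.ofReal (G s x) * ∫⁻ z, fkPsi G M (s + 1) n Set.univ z ∂(M (s + 1) x)
          ≤ (ENNReal.ofReal δ * ENNReal.ofReal (G s y))
            * ((ENNReal.ofReal ε)⁻¹ * ∫⁻ z, fkPsi G M (s + 1) n Set.univ z ∂(M (s + 1) y)) :=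
            mul_le_mul' h1 h2
        _ = (ENNReal.ofReal δ * (ENNReal.ofReal ε)⁻¹)
            * (ENNReal.ofReal (G s y) * ∫⁻ z, fkPsi G M (s + 1) n Set.univ z ∂(M (s + 1) y)) := by
            ring

end Bounds

section Osc

variable (G : ℕ → E → ℝ) (M : ℕ → Kernel E E) [∀ p, IsMarkovKernel (M p)]
variable {δ ε : ℝ}

/-- Oscillation contraction for the normalized Feynman–Kac kernel (Dobrushin-type bound). -/
lemma fkPsi_osc [Nonempty E]
    (hGm : ∀ p, Measurable (G p)) (hGpos : ∀ p x, 0 < G p x)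
    (hGb : ∀ p, ∃ C : ℝ, ∀ x, G p x ≤ C)
    (hδ : 1 ≤ δ) (hG : ∀ p x y, G p x ≤ δ * G p y)
    (hε : ε ∈ Set.Ioo (0:ℝ) 1)
    (hM : ∀ (p : ℕ) (x y : E) (A : Set E), MeasurableSet A →
      ENNReal.ofReal ε * M p y A ≤ M p x A) :
    ∀ (n s : ℕ) (A : Set E), MeasurableSet A → ∀ x y,
      fkPsi G M s n A x / fkPsi G M s n Set.univ x
        ≤ fkPsi G M s n A y / fkPsi G M s n Set.univ y
            + (1 - (ENNReal.ofReal ε) ^ 2) ^ n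
  | 0, s, A, hA, x, y => by
      have h1 : fkPsi G M s 0 A x / fkPsi G M s 0 Set.univ x ≤ 1 := by
        classical
        by_cases hx : x ∈ A <;> simp [fkPsi, Set.indicator_apply, hx]
      calc fkPsi G M s 0 A x / fkPsi G M s 0 Set.univ x ≤ 1 := h1
        _ = 0 + 1 := (zero_add 1).symm
        _ ≤ fkPsi G M s 0 A y / fkPsi G M s 0 Set.univ y + (1 - (ENNReal.ofReal ε) ^ 2) ^ 0 := by
            rw [pow_zero]
            exact add_le_add zero_le le_rfl
  | n + 1, s, A, hA, x, y => by
      set e : ℝ≥0∞ := ENNReal.ofReal ε with he_def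
      have he0 : e ≠ 0 := (ENNReal.ofReal_pos.2 hε.1).ne'
      have he1 : e ≤ 1 := ENNReal.ofReal_le_one.2 hε.2.le
      have he2 : e ^ 2 ≤ 1 := by
        calc e ^ 2 ≤ 1 ^ 2 := pow_le_pow_left' he1 2
          _ = 1 := one_pow 2
      set h' : E → ℝ≥0∞ := fkPsi G M (s + 1) n Set.univ with hh'_def
      set w : E → ℝ≥0∞ := fkPsi G M (s + 1) n A with hw_def
      obtain ⟨c, C, hc, hC, hcC⟩ :=
        fkPsi_univ_bounds G M (δ := δ) hGpos hGb hδ hG n (s + 1)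
      have hh0 : ∀ z, h' z ≠ 0 := fun z => (lt_of_lt_of_le hc (hcC z).1).ne'
      have hht : ∀ z, h' z ≠ ⊤ := fun z => ((hcC z).2.trans_lt (lt_top_iff_ne_top.2 hC)).ne
      set u : E → ℝ≥0∞ := fun z => w z / h' z with hu_def
      set i : ℝ≥0∞ := ⨅ z, u z with hi_def
      have hui : ∀ z, i ≤ u z := fun z => iInf_le _ z
      set B : ℝ≥0∞ := (1 - e ^ 2) ^ n with hB_def
      have hB1 : B ≤ 1 := by
        calc B ≤ 1 ^ n := pow_le_pow_left' tsub_le_self n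
          _ = 1 := one_pow n
      have hIH : ∀ a b, u a ≤ u b + B :=
        fkPsi_osc hGm hGpos hGb hδ hG hε hM n (s + 1) A hA
      have huB : ∀ z, u z ≤ i + B := by
        intro z
        refine tsub_le_iff_right.1 (le_iInf fun z' => tsub_le_iff_right.2 ?_)
        exact hIH z z'
      set v : E → ℝ≥0∞ := fun z => u z - i with hv_def
      have hvB : ∀ z, v z ≤ B := fun z =>
        tsub_le_iff_right.2 (by rw [add_comm]; exact huB z)
      have hw_decomp : ∀ z, w z = v z * h' z + i * h' z := by
        intro z
        rw [← add_mul, hv_def]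
        simp only
        rw [tsub_add_cancel_of_le (hui z), hu_def]
        exact (ENNReal.div_mul_cancel (hh0 z) (hht z)).symm
      -- measurability
      have hwm : Measurable w := fkPsi_measurable G M hGm n (s + 1) A hA
      have hh'm : Measurable h' := fkPsi_measurable G M hGm n (s + 1) Set.univ MeasurableSet.univ
      have hvh'm : Measurable fun z => v z * h' z :=
        ((hwm.div hh'm).sub measurable_const).mul hh'm
      -- the key reformulation of the normalized kernel at any point
      have key : ∀ t : E, fkPsi G M s (n + 1) A t / fkPsi G M s (n + 1) Set.univ t
          = (∫⁻ z, v z * h' z ∂(M (s + 1) t)) / (∫⁻ z, h' z ∂(M (s + 1) t)) + i := by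
        intro t
        have hGt0 : ENNReal.ofReal (G s t) ≠ 0 := (ENNReal.ofReal_pos.2 (hGpos s t)).ne'
        have hb0 : (∫⁻ z, h' z ∂(M (s + 1) t)) ≠ 0 :=
          (lt_of_lt_of_le hc (const_le_lintegral (μ := (M (s + 1) t)) fun z => (hcC z).1)).ne'
        have hbt : (∫⁻ z, h' z ∂(M (s + 1) t)) ≠ ⊤ :=
          ((lintegral_le_const' fun z => (hcC z).2).trans_lt (lt_top_iff_ne_top.2 hC)).ne
        have hsplit : (∫⁻ z, w z ∂(M (s + 1) t))
            = (∫⁻ z, v z * h' z ∂(M (s + 1) t)) + i * ∫⁻ z, h' z ∂(M (s + 1) t) := by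
          rw [lintegral_congr hw_decomp, lintegral_add_left hvh'm, lintegral_const_mul i hh'm]
        calc fkPsi G M s (n + 1) A t / fkPsi G M s (n + 1) Set.univ t
            = (ENNReal.ofReal (G s t) * ∫⁻ z, w z ∂(M (s + 1) t))
              / (ENNReal.ofReal (G s t) * ∫⁻ z, h' z ∂(M (s + 1) t)) := rfl
          _ = (∫⁻ z, w z ∂(M (s + 1) t)) / (∫⁻ z, h' z ∂(M (s + 1) t)) :=
              ENNReal.mul_div_mul_left _ _ hGt0 ENNReal.ofReal_ne_top
          _ = ((∫⁻ z, v z * h' z ∂(M (s + 1) t)) + i * ∫⁻ z, h' z ∂(M (s + 1) t))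
              / (∫⁻ z, h' z ∂(M (s + 1) t)) := by rw [hsplit]
          _ = (∫⁻ z, v z * h' z ∂(M (s + 1) t)) / (∫⁻ z, h' z ∂(M (s + 1) t)) + i := by
              rw [ENNReal.add_div, mul_div_assoc, ENNReal.div_self hb0 hbt, mul_one]
      set a : ℝ≥0∞ := ∫⁻ z, v z * h' z ∂(M (s + 1) x) with ha_def
      set b : ℝ≥0∞ := ∫⁻ z, h' z ∂(M (s + 1) x) with hb_def
      set a' : ℝ≥0∞ := ∫⁻ z, v z * h' z ∂(M (s + 1) y) with ha'_def
      set b' : ℝ≥0∞ := ∫⁻ z, h' z ∂(M (s + 1) y) with hb'_def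
      have hb0 : b ≠ 0 :=
        (lt_of_lt_of_le hc (const_le_lintegral fun z => (hcC z).1)).ne'
      have hbt : b ≠ ⊤ :=
        ((lintegral_le_const' fun z => (hcC z).2).trans_lt (lt_top_iff_ne_top.2 hC)).ne
      have hb'0 : b' ≠ 0 :=
        (lt_of_lt_of_le hc (const_le_lintegral fun z => (hcC z).1)).ne'
      have hb't : b' ≠ ⊤ :=
        ((lintegral_le_const' fun z => (hcC z).2).trans_lt (lt_top_iff_ne_top.2 hC)).ne
      have hab : a ≤ B * b := by
        calc a ≤ ∫⁻ z, B * h' z ∂(M (s + 1) x) :=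
              lintegral_mono fun z => mul_le_mul_left (hvB z) _
          _ = B * b := lintegral_const_mul B hh'm
      have hea : e * a ≤ a' := kernel_lintegral_min M (ε := ε) hM (s + 1) y x _
      have heb : e * b' ≤ b := kernel_lintegral_min M (ε := ε) hM (s + 1) x y _
      have hmain : a / b ≤ a' / b' + (1 - e ^ 2) * B := by
        have h2 : (1 - e ^ 2) * (a / b) ≤ (1 - e ^ 2) * B :=
          mul_le_mul_right (ENNReal.div_le_of_le_mul hab) _
        have h1 : e ^ 2 * (a / b) ≤ a' / b' := by
          rw [mul_div_assoc']
          rw [ENNReal.div_le_iff hb0 hbt]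
          calc e ^ 2 * a = e * (e * a) := by ring
            _ ≤ e * a' := mul_le_mul_right hea _
            _ = a' / b' * (e * b') := by
                rw [mul_comm e b', ← mul_assoc, ENNReal.div_mul_cancel hb'0 hb't, mul_comm]
            _ ≤ a' / b' * b := mul_le_mul_right heb _
        calc a / b = (e ^ 2 + (1 - e ^ 2)) * (a / b) := by
              rw [add_tsub_cancel_of_le he2, one_mul]
          _ = e ^ 2 * (a / b) + (1 - e ^ 2) * (a / b) := add_mul _ _ _
          _ ≤ a' / b' + (1 - e ^ 2) * B := add_le_add h1 h2
      rw [key x, key y]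
      calc a / b + i ≤ (a' / b' + (1 - e ^ 2) * B) + i := add_le_add_left hmain i
        _ = (a' / b' + i) + (1 - e ^ 2) ^ (n + 1) := by
            rw [hB_def, pow_succ]
            ring

end Osc

section Rep

variable (G : ℕ → E → ℝ) (M : ℕ → Kernel E E) [∀ p, IsMarkovKernel (M p)]
variable {δ ε : ℝ}

lemma GInt_bounds [Nonempty E] (hGpos : ∀ p x, 0 < G p x)
    (hGb : ∀ p, ∃ C : ℝ, ∀ x, G p x ≤ C) (hδ : 1 ≤ δ) (hG : ∀ p x y, G p x ≤ δ * G p y)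
    (p : ℕ) (μ : Measure E) [IsProbabilityMeasure μ] :
    (∫⁻ x, ENNReal.ofReal (G p x) ∂μ) ≠ 0 ∧ (∫⁻ x, ENNReal.ofReal (G p x) ∂μ) ≠ ⊤ := by
  obtain ⟨x₀⟩ := (inferInstance : Nonempty E)
  obtain ⟨Cp, hCp⟩ := hGb p
  have hδ0 : (0 : ℝ) < δ := lt_of_lt_of_le one_pos hδ
  constructor
  · have hlow : ENNReal.ofReal (G p x₀ / δ) ≤ ∫⁻ x, ENNReal.ofReal (G p x) ∂μ := by
      refine const_le_lintegral fun x => ENNReal.ofReal_le_ofReal ?_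
      rw [div_le_iff₀ hδ0]
      calc G p x₀ ≤ δ * G p x := hG p x₀ x
        _ = G p x * δ := mul_comm _ _
    exact (lt_of_lt_of_le (ENNReal.ofReal_pos.2 (div_pos (hGpos p x₀) hδ0)) hlow).ne'
  · have hup : (∫⁻ x, ENNReal.ofReal (G p x) ∂μ) ≤ ENNReal.ofReal Cp :=
      lintegral_le_const' fun x => ENNReal.ofReal_le_ofReal (hCp x)
    exact (hup.trans_lt ENNReal.ofReal_lt_top).ne

lemma fkStep_isProbabilityMeasure [Nonempty E] (hGm : ∀ p, Measurable (G p))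
    (hGpos : ∀ p x, 0 < G p x) (hGb : ∀ p, ∃ C : ℝ, ∀ x, G p x ≤ C)
    (hδ : 1 ≤ δ) (hG : ∀ p x y, G p x ≤ δ * G p y)
    (p : ℕ) (μ : Measure E) [IsProbabilityMeasure μ] :
    IsProbabilityMeasure (fkStep (G p) (M (p + 1)) μ) := by
  obtain ⟨hc0, hct⟩ := GInt_bounds G (δ := δ) hGpos hGb hδ hG p μ
  constructor
  rw [fkStep, Measure.bind_apply MeasurableSet.univ (Kernel.measurable _).aemeasurable]
  have : ∀ x : E, (M (p + 1) x) Set.univ = 1 := fun x => measure_univ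
  simp only [this]
  rw [lintegral_one, Measure.smul_apply, smul_eq_mul]
  rw [withDensity_apply _ MeasurableSet.univ, setLIntegral_univ]
  exact ENNReal.inv_mul_cancel hc0 hct

lemma lintegral_fkStep (hGm : ∀ p, Measurable (G p)) (p : ℕ) (μ : Measure E)
    {g : E → ℝ≥0∞} (hg : Measurable g) :
    ∫⁻ z, g z ∂(fkStep (G p) (M (p + 1)) μ)
      = (∫⁻ x, ENNReal.ofReal (G p x) ∂μ)⁻¹
        * ∫⁻ x, ENNReal.ofReal (G p x) * ∫⁻ z, g z ∂(M (p + 1) x) ∂μ := by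
  have hg2 : Measurable fun x => ∫⁻ z, g z ∂(M (p + 1) x) :=
    Measurable.lintegral_kernel_prod_right' (f := fun (q : E × E) => g q.2)
      (hg.comp measurable_snd)
  rw [fkStep, Measure.lintegral_bind (Kernel.measurable _).aemeasurable hg.aemeasurable, lintegral_smul_measure,
    lintegral_withDensity_eq_lintegral_mul _ ((hGm p).ennreal_ofReal) hg2]
  rfl

lemma fkIter_shift : ∀ (n s : ℕ) (μ : Measure E),
    fkIter G M s (n + 1) μ = fkIter G M (s + 1) n (fkStep (G s) (M (s + 1)) μ)
  | 0, s, μ => by simp [fkIter]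
  | n + 1, s, μ => by
      have IH := fkIter_shift n s μ
      calc fkIter G M s (n + 2) μ
          = fkStep (G (s + (n + 1))) (M (s + (n + 1) + 1)) (fkIter G M s (n + 1) μ) := rfl
        _ = fkStep (G (s + 1 + n)) (M (s + 1 + n + 1))
              (fkIter G M (s + 1) n (fkStep (G s) (M (s + 1)) μ)) := by
            rw [IH, show s + (n + 1) = s + 1 + n from by omega]
        _ = fkIter G M (s + 1) (n + 1) (fkStep (G s) (M (s + 1)) μ) := rfl

lemma fkIter_rep [Nonempty E] (hGm : ∀ p, Measurable (G p))
    (hGpos : ∀ p x, 0 < G p x) (hGb : ∀ p, ∃ C : ℝ, ∀ x, G p x ≤ C)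
    (hδ : 1 ≤ δ) (hG : ∀ p x y, G p x ≤ δ * G p y) :
    ∀ (n s : ℕ) (μ : Measure E), IsProbabilityMeasure μ →
      ∀ (A : Set E), MeasurableSet A →
      fkIter G M s n μ A
        = (∫⁻ x, fkPsi G M s n A x ∂μ) / (∫⁻ x, fkPsi G M s n Set.univ x ∂μ)
  | 0, s, μ, hμ, A, hA => by
      have h1 : ∫⁻ x, fkPsi G M s 0 A x ∂μ = μ A := by
        rw [fkPsi_zero]; exact lintegral_indicator_one hA
      have h2 : ∫⁻ x, fkPsi G M s 0 Set.univ x ∂μ = 1 := by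
        simp [fkPsi_zero]
      rw [h1, h2, div_one]
      rfl
  | n + 1, s, μ, hμ, A, hA => by
      haveI := hμ
      haveI : IsProbabilityMeasure (fkStep (G s) (M (s + 1)) μ) :=
        fkStep_isProbabilityMeasure G M (δ := δ) hGm hGpos hGb hδ hG s μ
      rw [fkIter_shift]
      rw [fkIter_rep hGm hGpos hGb hδ hG n (s + 1) (fkStep (G s) (M (s + 1)) μ)
        inferInstance A hA]
      rw [lintegral_fkStep G M hGm s μ (fkPsi_measurable G M hGm n (s + 1) A hA),
        lintegral_fkStep G M hGm s μ
          (fkPsi_measurable G M hGm n (s + 1) Set.univ MeasurableSet.univ)]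
      obtain ⟨hc0, hct⟩ := GInt_bounds G (δ := δ) hGpos hGb hδ hG s μ
      have hi0 : (∫⁻ x, ENNReal.ofReal (G s x) ∂μ)⁻¹ ≠ 0 := ENNReal.inv_ne_zero.2 hct
      have hit : (∫⁻ x, ENNReal.ofReal (G s x) ∂μ)⁻¹ ≠ ⊤ := ENNReal.inv_ne_top.2 hc0
      exact ENNReal.mul_div_mul_left _ _ hi0 hit

end Rep

section TV

variable {μ ρ : Measure E}

lemma tvDist_bddAbove (μ ρ : Measure E) [IsProbabilityMeasure μ] [IsProbabilityMeasure ρ] :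
    BddAbove (Set.range fun A : {s : Set E // MeasurableSet s} =>
      |(μ A).toReal - (ρ A).toReal|) := by
  refine ⟨2, ?_⟩
  rintro r ⟨A, rfl⟩
  have h1 : (μ A).toReal ≤ 1 := by
    have := prob_le_one (μ := μ) (s := A)
    calc (μ (A : Set E)).toReal ≤ (1 : ℝ≥0∞).toReal := ENNReal.toReal_mono ENNReal.one_ne_top this
      _ = 1 := by simp
  have h2 : (ρ A).toReal ≤ 1 := by
    have := prob_le_one (μ := ρ) (s := A)
    calc (ρ (A : Set E)).toReal ≤ (1 : ℝ≥0∞).toReal := ENNReal.toReal_mono ENNReal.one_ne_top this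
      _ = 1 := by simp
  have h3 : 0 ≤ (μ A).toReal := ENNReal.toReal_nonneg
  have h4 : 0 ≤ (ρ A).toReal := ENNReal.toReal_nonneg
  rw [abs_sub_le_iff]
  constructor <;> nlinarith

lemma tvDist_nonneg (μ ρ : Measure E) [IsProbabilityMeasure μ] [IsProbabilityMeasure ρ] :
    0 ≤ tvDist μ ρ := by
  have := le_ciSup (tvDist_bddAbove μ ρ) (⟨∅, MeasurableSet.empty⟩ : {s : Set E // MeasurableSet s})
  simpa [tvDist] using this

lemma abs_le_tvDist [IsProbabilityMeasure μ] [IsProbabilityMeasure ρ]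
    {A : Set E} (hA : MeasurableSet A) :
    |(μ A).toReal - (ρ A).toReal| ≤ tvDist μ ρ :=
  le_ciSup (tvDist_bddAbove μ ρ) (⟨A, hA⟩ : {s : Set E // MeasurableSet s})

lemma tvDist_comm (μ ρ : Measure E) : tvDist μ ρ = tvDist ρ μ := by
  unfold tvDist
  congr 1
  funext A
  exact abs_sub_comm _ _

/-- Layer-cake comparison: the difference of integrals of a function with values in `[0, l]`
against two probability measures is controlled by `l` times the total variation distance. -/
lemma lintegral_diff_le_tv [IsProbabilityMeasure μ] [IsProbabilityMeasure ρ]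
    {u : E → ℝ≥0∞} (hu : Measurable u) {l : ℝ} (hl : 0 ≤ l)
    (hub : ∀ x, u x ≤ ENNReal.ofReal l) :
    (∫⁻ x, u x ∂μ).toReal ≤ (∫⁻ x, u x ∂ρ).toReal + l * tvDist μ ρ := by
  set tv := tvDist μ ρ with htv_def
  have htv0 : 0 ≤ tv := tvDist_nonneg μ ρ
  set f : E → ℝ := fun x => (u x).toReal with hf_def
  have hfm : Measurable f := hu.ennreal_toReal
  have hfnn : ∀ x, 0 ≤ f x := fun x => ENNReal.toReal_nonneg
  have hfl : ∀ x, f x ≤ l := fun x => by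
    have := hub x
    calc f x ≤ (ENNReal.ofReal l).toReal :=
          ENNReal.toReal_mono ENNReal.ofReal_ne_top this
      _ = l := ENNReal.toReal_ofReal hl
  have hu_eq : ∀ x, u x = ENNReal.ofReal (f x) := fun x =>
    (ENNReal.ofReal_toReal ((hub x).trans_lt ENNReal.ofReal_lt_top).ne).symm
  -- layer cake representations
  have Hμ : ∫⁻ x, u x ∂μ = ∫⁻ t in Set.Ioi (0:ℝ), μ {a | t < f a} := by
    calc ∫⁻ x, u x ∂μ = ∫⁻ x, ENNReal.ofReal (f x) ∂μ := lintegral_congr hu_eq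
      _ = _ := lintegral_eq_lintegral_meas_lt μ (Filter.Eventually.of_forall hfnn)
          hfm.aemeasurable
  have Hρ : ∫⁻ x, u x ∂ρ = ∫⁻ t in Set.Ioi (0:ℝ), ρ {a | t < f a} := by
    calc ∫⁻ x, u x ∂ρ = ∫⁻ x, ENNReal.ofReal (f x) ∂ρ := lintegral_congr hu_eq
      _ = _ := lintegral_eq_lintegral_meas_lt ρ (Filter.Eventually.of_forall hfnn)
          hfm.aemeasurable
  -- set-level comparison
  have hset : ∀ (A : Set E), MeasurableSet A → μ A ≤ ρ A + ENNReal.ofReal tv := by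
    intro A hA
    have h1 : (μ A).toReal - (ρ A).toReal ≤ tv :=
      (le_abs_self _).trans (abs_le_tvDist hA)
    have h2 : (μ A).toReal ≤ (ρ A).toReal + tv := by linarith
    calc μ A = ENNReal.ofReal (μ A).toReal := (ENNReal.ofReal_toReal (measure_ne_top μ A)).symm
      _ ≤ ENNReal.ofReal ((ρ A).toReal + tv) := ENNReal.ofReal_le_ofReal h2
      _ = ENNReal.ofReal (ρ A).toReal + ENNReal.ofReal tv := ENNReal.ofReal_add
          ENNReal.toReal_nonneg htv0
      _ = ρ A + ENNReal.ofReal tv := by rw [ENNReal.ofReal_toReal (measure_ne_top ρ A)]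
  -- split the time domain
  have hmebs : ∀ t : ℝ, MeasurableSet {a | t < f a} := fun t =>
    measurableSet_lt measurable_const hfm
  have hzero : ∫⁻ t in Set.Ioi l, μ {a | t < f a} = 0 := by
    have : ∀ t ∈ Set.Ioi l, μ {a | t < f a} = 0 := by
      intro t ht
      have : {a | t < f a} = ∅ := by
        ext a
        simp only [Set.mem_setOf_eq, Set.mem_empty_iff_false, iff_false, not_lt]
        exact (hfl a).trans ht.le
      rw [this]; exact measure_empty
    calc ∫⁻ t in Set.Ioi l, μ {a | t < f a}
        = ∫⁻ t in Set.Ioi l, 0 := setLIntegral_congr_fun measurableSet_Ioi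
          this
      _ = 0 := lintegral_zero
  have hsplitμ : ∫⁻ t in Set.Ioi (0:ℝ), μ {a | t < f a}
      = ∫⁻ t in Set.Ioc 0 l, μ {a | t < f a} := by
    rw [← Set.Ioc_union_Ioi_eq_Ioi hl, lintegral_union measurableSet_Ioi
      (Set.Ioc_disjoint_Ioi le_rfl), hzero, add_zero]
  have hcomp : ∫⁻ t in Set.Ioc 0 l, μ {a | t < f a}
      ≤ (∫⁻ t in Set.Ioc 0 l, ρ {a | t < f a}) + ENNReal.ofReal tv * ENNReal.ofReal l := by
    calc ∫⁻ t in Set.Ioc 0 l, μ {a | t < f a}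
        ≤ ∫⁻ t in Set.Ioc 0 l, (ρ {a | t < f a} + ENNReal.ofReal tv) :=
          lintegral_mono fun t => hset _ (hmebs t)
      _ = (∫⁻ t in Set.Ioc 0 l, ρ {a | t < f a})
          + ENNReal.ofReal tv * (volume (Set.Ioc (0:ℝ) l)) := by
          rw [lintegral_add_right _ measurable_const, lintegral_const,
            Measure.restrict_apply_univ]
      _ = _ := by rw [Real.volume_Ioc, sub_zero]
  have hIocρ : ∫⁻ t in Set.Ioc 0 l, ρ {a | t < f a}
      ≤ ∫⁻ t in Set.Ioi (0:ℝ), ρ {a | t < f a} :=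
    lintegral_mono' (Measure.restrict_mono Set.Ioc_subset_Ioi_self le_rfl) le_rfl
  have hfinal : ∫⁻ x, u x ∂μ ≤ (∫⁻ x, u x ∂ρ) + ENNReal.ofReal (l * tv) := by
    rw [Hμ, Hρ, hsplitμ]
    calc ∫⁻ t in Set.Ioc 0 l, μ {a | t < f a}
        ≤ (∫⁻ t in Set.Ioc 0 l, ρ {a | t < f a}) + ENNReal.ofReal tv * ENNReal.ofReal l := hcomp
      _ ≤ (∫⁻ t in Set.Ioi (0:ℝ), ρ {a | t < f a}) + ENNReal.ofReal (l * tv) := by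
          refine add_le_add hIocρ ?_
          rw [← ENNReal.ofReal_mul htv0, mul_comm]
  -- convert to reals
  have hρt : (∫⁻ x, u x ∂ρ) ≠ ⊤ :=
    ((lintegral_le_const' hub).trans_lt ENNReal.ofReal_lt_top).ne
  have hrt : (∫⁻ x, u x ∂ρ) + ENNReal.ofReal (l * tv) ≠ ⊤ :=
    ENNReal.add_ne_top.2 ⟨hρt, ENNReal.ofReal_ne_top⟩
  calc (∫⁻ x, u x ∂μ).toReal ≤ ((∫⁻ x, u x ∂ρ) + ENNReal.ofReal (l * tv)).toReal :=
        ENNReal.toReal_mono hrt hfinal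
    _ = (∫⁻ x, u x ∂ρ).toReal + l * tv := by
        rw [ENNReal.toReal_add hρt ENNReal.ofReal_ne_top,
          ENNReal.toReal_ofReal (mul_nonneg hl htv0)]

end TV

section Main

variable (G : ℕ → E → ℝ) (M : ℕ → Kernel E E) [∀ p, IsMarkovKernel (M p)]
variable {δ ε : ℝ}

/-- One-sided stability estimate for a fixed measurable set. -/
lemma fk_onesided [Nonempty E]
    (hGm : ∀ p, Measurable (G p)) (hGpos : ∀ p x, 0 < G p x)
    (hGb : ∀ p, ∃ C : ℝ, ∀ x, G p x ≤ C)
    (hδ : 1 ≤ δ) (hG : ∀ p x y, G p x ≤ δ * G p y)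
    (hε : ε ∈ Set.Ioo (0:ℝ) 1)
    (hM : ∀ (p : ℕ) (x y : E) (A : Set E), MeasurableSet A →
      ENNReal.ofReal ε * M p y A ≤ M p x A)
    (s n : ℕ) (μ ρ : Measure E) [IsProbabilityMeasure μ] [IsProbabilityMeasure ρ]
    {A : Set E} (hA : MeasurableSet A) :
    (fkIter G M s n μ A).toReal - (fkIter G M s n ρ A).toReal
      ≤ 2 * (δ / ε) * (1 - ε ^ 2) ^ n * tvDist μ ρ := by
  have hε0 : (0:ℝ) < ε := hε.1
  have hε1 : ε < 1 := hε.2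
  set e : ℝ≥0∞ := ENNReal.ofReal ε with he_def
  have he0 : e ≠ 0 := (ENNReal.ofReal_pos.2 hε0).ne'
  set tv : ℝ := tvDist μ ρ with htv_def
  have htv0 : 0 ≤ tv := tvDist_nonneg μ ρ
  set h : E → ℝ≥0∞ := fkPsi G M s n Set.univ with hh_def
  set fA : E → ℝ≥0∞ := fkPsi G M s n A with hfA_def
  have hhm : Measurable h := fkPsi_measurable G M hGm n s Set.univ MeasurableSet.univ
  have hfAm : Measurable fA := fkPsi_measurable G M hGm n s A hA
  obtain ⟨c, C, hc, hC, hcC⟩ := fkPsi_univ_bounds G M (δ := δ) hGpos hGb hδ hG n s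
  have hh0 : ∀ z, h z ≠ 0 := fun z => (lt_of_lt_of_le hc (hcC z).1).ne'
  have hht : ∀ z, h z ≠ ⊤ := fun z => ((hcC z).2.trans_lt (lt_top_iff_ne_top.2 hC)).ne
  set K : ℝ≥0∞ := ENNReal.ofReal δ * (ENNReal.ofReal ε)⁻¹ with hK_def
  have hKt : K ≠ ⊤ := ENNReal.mul_ne_top ENNReal.ofReal_ne_top (ENNReal.inv_ne_top.2 he0)
  have hratio : ∀ x y, h x ≤ K * h y := fun x y =>
    fkPsi_univ_ratio G M hε hδ hG hM n s x y
  set u : E → ℝ≥0∞ := fun z => fA z / h z with hu_def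
  have hum : Measurable u := hfAm.div hhm
  have hfa_eq : ∀ z, fA z = u z * h z := fun z =>
    (ENNReal.div_mul_cancel (hh0 z) (hht z)).symm
  have hu1 : ∀ z, u z ≤ 1 := fun z => by
    rw [hu_def]
    exact ENNReal.div_le_of_le_mul (by rw [one_mul]; exact fkPsi_le_univ G M n s A z)
  set B : ℝ≥0∞ := (1 - e ^ 2) ^ n with hB_def
  have hB1 : B ≤ 1 := by
    calc B ≤ 1 ^ n := pow_le_pow_left' tsub_le_self n
      _ = 1 := one_pow n
  have hosc : ∀ a b, u a ≤ u b + B :=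
    fkPsi_osc G M (δ := δ) hGm hGpos hGb hδ hG hε hM n s A hA
  set i : ℝ≥0∞ := ⨅ z, u z with hi_def
  have hui : ∀ z, i ≤ u z := fun z => iInf_le _ z
  have huB : ∀ z, u z ≤ i + B := by
    intro z
    refine tsub_le_iff_right.1 (le_iInf fun z' => tsub_le_iff_right.2 ?_)
    exact hosc z z'
  set m' : ℝ≥0∞ := ⨅ z, h z with hm'_def
  have hcm' : c ≤ m' := le_iInf fun z => (hcC z).1
  have hm'0 : m' ≠ 0 := (lt_of_lt_of_le hc hcm').ne'
  have hm't : m' ≠ ⊤ := by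
    obtain ⟨z₀⟩ := (inferInstance : Nonempty E)
    exact ((iInf_le h z₀).trans_lt (lt_top_iff_ne_top.2 (hht z₀))).ne
  have hhK : ∀ z, h z ≤ K * m' := by
    intro z
    rw [hm'_def, ENNReal.mul_iInf_of_ne (by
      rw [hK_def]
      exact mul_ne_zero (ENNReal.ofReal_pos.2 (lt_of_lt_of_le one_pos hδ)).ne'
        (ENNReal.inv_ne_zero.2 ENNReal.ofReal_ne_top)) hKt]
    exact le_iInf fun y => hratio z y
  -- the four integrals
  set Sμ : ℝ≥0∞ := ∫⁻ z, fA z ∂μ with hSμ_def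
  set Tμ : ℝ≥0∞ := ∫⁻ z, h z ∂μ with hTμ_def
  set Sρ : ℝ≥0∞ := ∫⁻ z, fA z ∂ρ with hSρ_def
  set Tρ : ℝ≥0∞ := ∫⁻ z, h z ∂ρ with hTρ_def
  have hTμ0 : Tμ ≠ 0 := (lt_of_lt_of_le hc (const_le_lintegral fun z => (hcC z).1)).ne'
  have hTμt : Tμ ≠ ⊤ :=
    ((lintegral_le_const' fun z => (hcC z).2).trans_lt (lt_top_iff_ne_top.2 hC)).ne
  have hTρ0 : Tρ ≠ 0 := (lt_of_lt_of_le hc (const_le_lintegral fun z => (hcC z).1)).ne'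
  have hTρt : Tρ ≠ ⊤ :=
    ((lintegral_le_const' fun z => (hcC z).2).trans_lt (lt_top_iff_ne_top.2 hC)).ne
  have hSμt : Sμ ≠ ⊤ :=
    ((lintegral_mono fun z => fkPsi_le_univ G M n s A z).trans_lt
      (lt_top_iff_ne_top.2 hTμt)).ne
  have hSρt : Sρ ≠ ⊤ :=
    ((lintegral_mono fun z => fkPsi_le_univ G M n s A z).trans_lt
      (lt_top_iff_ne_top.2 hTρt)).ne
  have hm'Tμ : m' ≤ Tμ := const_le_lintegral fun z => iInf_le h z
  -- representation
  have hrepμ : fkIter G M s n μ A = Sμ / Tμ :=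
    fkIter_rep G M (δ := δ) hGm hGpos hGb hδ hG n s μ inferInstance A hA
  have hrepρ : fkIter G M s n ρ A = Sρ / Tρ :=
    fkIter_rep G M (δ := δ) hGm hGpos hGb hδ hG n s ρ inferInstance A hA
  set cr : ℝ≥0∞ := Sρ / Tρ with hcr_def
  have hcrt : cr ≠ ⊤ := by
    rw [hcr_def]
    exact (ENNReal.div_lt_top hSρt hTρ0).ne
  have hcr_ge : i ≤ cr := by
    rw [hcr_def, ENNReal.le_div_iff_mul_le (Or.inl hTρ0) (Or.inl hTρt)]
    calc i * Tρ = ∫⁻ z, i * h z ∂ρ := (lintegral_const_mul i hhm).symm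
      _ ≤ ∫⁻ z, fA z ∂ρ := lintegral_mono fun z => by
          rw [hfa_eq z]; exact mul_le_mul_left (hui z) _
  have hcr_le : ∀ z, cr ≤ u z + B := by
    intro z
    rw [hcr_def]
    refine ENNReal.div_le_of_le_mul ?_
    calc Sρ ≤ ∫⁻ y, (u z + B) * h y ∂ρ := lintegral_mono fun y => by
          rw [hfa_eq y]; exact mul_le_mul_left (hosc y z) _
      _ = (u z + B) * Tρ := lintegral_const_mul _ hhm
  -- the two nonnegative parts
  set g₁ : E → ℝ≥0∞ := fun z => (u z - cr) * h z with hg₁_def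
  set g₂ : E → ℝ≥0∞ := fun z => (cr - u z) * h z with hg₂_def
  have hg₁m : Measurable g₁ := (hum.sub measurable_const).mul hhm
  have hg₂m : Measurable g₂ := (measurable_const.sub hum).mul hhm
  set L : ℝ≥0∞ := B * (K * m') with hL_def
  have hLt : L ≠ ⊤ := ENNReal.mul_ne_top
    (lt_of_le_of_lt hB1 (lt_top_iff_ne_top.2 ENNReal.one_ne_top)).ne
    (ENNReal.mul_ne_top hKt hm't)
  have hg₁b : ∀ z, g₁ z ≤ L := by
    intro z
    have h1 : u z - cr ≤ B := tsub_le_iff_right.2 (by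
      calc u z ≤ i + B := huB z
        _ ≤ cr + B := add_le_add_left hcr_ge B
        _ = B + cr := add_comm _ _)
    calc g₁ z ≤ B * h z := mul_le_mul_left h1 _
      _ ≤ B * (K * m') := mul_le_mul_right (hhK z) _
  have hg₂b : ∀ z, g₂ z ≤ L := by
    intro z
    have h1 : cr - u z ≤ B := tsub_le_iff_right.2 (by
      calc cr ≤ u z + B := hcr_le z
        _ = B + u z := add_comm _ _)
    calc g₂ z ≤ B * h z := mul_le_mul_left h1 _
      _ ≤ B * (K * m') := mul_le_mul_right (hhK z) _
  -- pointwise identity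
  have hiden : ∀ z, fA z + g₂ z = cr * h z + g₁ z := by
    intro z
    rcases le_total (u z) cr with hzc | hzc
    · have e1 : u z - cr = 0 := tsub_eq_zero_of_le hzc
      rw [hg₁_def, hg₂_def]
      simp only [e1, zero_mul, add_zero]
      rw [hfa_eq z, ← add_mul, add_tsub_cancel_of_le hzc]
    · have e2 : cr - u z = 0 := tsub_eq_zero_of_le hzc
      rw [hg₁_def, hg₂_def]
      simp only [e2, zero_mul, add_zero]
      rw [hfa_eq z, ← add_mul, add_tsub_cancel_of_le hzc]
  -- integrated identity
  set J₁μ : ℝ≥0∞ := ∫⁻ z, g₁ z ∂μ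
  set J₂μ : ℝ≥0∞ := ∫⁻ z, g₂ z ∂μ
  set J₁ρ : ℝ≥0∞ := ∫⁻ z, g₁ z ∂ρ
  set J₂ρ : ℝ≥0∞ := ∫⁻ z, g₂ z ∂ρ
  have hJ₁μt : J₁μ ≠ ⊤ := ((lintegral_le_const' hg₁b).trans_lt (lt_top_iff_ne_top.2 hLt)).ne
  have hJ₂μt : J₂μ ≠ ⊤ := ((lintegral_le_const' hg₂b).trans_lt (lt_top_iff_ne_top.2 hLt)).ne
  have hJ₁ρt : J₁ρ ≠ ⊤ := ((lintegral_le_const' hg₁b).trans_lt (lt_top_iff_ne_top.2 hLt)).ne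
  have hJ₂ρt : J₂ρ ≠ ⊤ := ((lintegral_le_const' hg₂b).trans_lt (lt_top_iff_ne_top.2 hLt)).ne
  have hintμ : Sμ + J₂μ = cr * Tμ + J₁μ := by
    calc Sμ + J₂μ = ∫⁻ z, fA z + g₂ z ∂μ := (lintegral_add_left hfAm g₂).symm
      _ = ∫⁻ z, cr * h z + g₁ z ∂μ := lintegral_congr hiden
      _ = cr * Tμ + J₁μ := by
          rw [lintegral_add_left (hhm.const_mul cr) g₁, lintegral_const_mul cr hhm]
  have hintρ : Sρ + J₂ρ = cr * Tρ + J₁ρ := by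
    calc Sρ + J₂ρ = ∫⁻ z, fA z + g₂ z ∂ρ := (lintegral_add_left hfAm g₂).symm
      _ = ∫⁻ z, cr * h z + g₁ z ∂ρ := lintegral_congr hiden
      _ = cr * Tρ + J₁ρ := by
          rw [lintegral_add_left (hhm.const_mul cr) g₁, lintegral_const_mul cr hhm]
  have hJρ : J₂ρ = J₁ρ := by
    have e1 : cr * Tρ = Sρ := by
      rw [hcr_def]; exact ENNReal.div_mul_cancel hTρ0 hTρt
    rw [e1] at hintρ
    exact (ENNReal.add_right_inj hSρt).1 hintρ
  -- real versions
  set sμ : ℝ := Sμ.toReal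
  set tμ : ℝ := Tμ.toReal
  set crR : ℝ := cr.toReal
  set j1μ : ℝ := J₁μ.toReal
  set j2μ : ℝ := J₂μ.toReal
  set j1ρ : ℝ := J₁ρ.toReal
  set j2ρ : ℝ := J₂ρ.toReal
  have hrealμ : sμ + j2μ = crR * tμ + j1μ := by
    have := congrArg ENNReal.toReal hintμ
    rwa [ENNReal.toReal_add hSμt hJ₂μt,
      ENNReal.toReal_add (ENNReal.mul_ne_top hcrt hTμt) hJ₁μt, ENNReal.toReal_mul] at this
  have hrealρ : j2ρ = j1ρ := congrArg ENNReal.toReal hJρ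
  set l : ℝ := L.toReal with hl_def
  have hl0 : 0 ≤ l := ENNReal.toReal_nonneg
  have hLoR : ENNReal.ofReal l = L := ENNReal.ofReal_toReal hLt
  have hLC1 : j1μ ≤ j1ρ + l * tv :=
    lintegral_diff_le_tv hg₁m hl0 (fun z => by rw [hLoR]; exact hg₁b z)
  have hLC2 : j2ρ ≤ j2μ + l * tv := by
    have := lintegral_diff_le_tv (μ := ρ) (ρ := μ) hg₂m hl0
      (fun z => by rw [hLoR]; exact hg₂b z)
    rwa [← tvDist_comm μ ρ] at this
  have hkey : sμ - crR * tμ ≤ 2 * l * tv := by nlinarith [hrealμ, hrealρ, hLC1, hLC2]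
  -- positivity of denominators and constants
  have htμ0 : 0 < tμ := by
    have h1 : (0:ℝ≥0∞) < Tμ := lt_of_lt_of_le hc (const_le_lintegral fun z => (hcC z).1)
    exact ENNReal.toReal_pos hTμ0 hTμt
  have hm'le : m'.toReal ≤ tμ := ENNReal.toReal_mono hTμt hm'Tμ
  -- compute the real constants
  have hK_real : K.toReal = δ / ε := by
    rw [hK_def, ENNReal.toReal_mul, ENNReal.toReal_inv, ENNReal.toReal_ofReal
      (le_trans zero_le_one hδ), ENNReal.toReal_ofReal hε0.le, div_eq_mul_inv]
  have hB_real : B.toReal = (1 - ε ^ 2) ^ n := by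
    have e1 : e ^ 2 = ENNReal.ofReal (ε ^ 2) := by
      rw [he_def, ENNReal.ofReal_pow hε0.le]
    have e2 : (1 : ℝ≥0∞) - e ^ 2 = ENNReal.ofReal (1 - ε ^ 2) := by
      rw [e1, ← ENNReal.ofReal_one, ← ENNReal.ofReal_sub _ (sq_nonneg ε)]
    rw [hB_def, ENNReal.toReal_pow, e2, ENNReal.toReal_ofReal (by nlinarith)]
  have hl_eq : l = (1 - ε ^ 2) ^ n * ((δ / ε) * m'.toReal) := by
    rw [hl_def, hL_def, ENNReal.toReal_mul, ENNReal.toReal_mul, hK_real, hB_real]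
  -- final computation
  rw [hrepμ, hrepρ, ENNReal.toReal_div]
  have hgoal : sμ / tμ - crR ≤ 2 * (δ / ε) * (1 - ε ^ 2) ^ n * tv := by
    have e3 : sμ / tμ - crR = (sμ - crR * tμ) / tμ := by
      field_simp
    rw [e3, div_le_iff₀ htμ0]
    have hδε1 : (0:ℝ) ≤ δ / ε := div_nonneg (le_trans zero_le_one hδ) hε0.le
    have hpow0 : (0:ℝ) ≤ (1 - ε ^ 2) ^ n := pow_nonneg (by nlinarith) n
    have hm'0R : (0:ℝ) ≤ m'.toReal := ENNReal.toReal_nonneg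
    calc sμ - crR * tμ ≤ 2 * l * tv := hkey
      _ = 2 * ((1 - ε ^ 2) ^ n * ((δ / ε) * m'.toReal)) * tv := by rw [hl_eq]
      _ = (2 * (δ / ε) * (1 - ε ^ 2) ^ n * tv) * m'.toReal := by ring
      _ ≤ (2 * (δ / ε) * (1 - ε ^ 2) ^ n * tv) * tμ := by
          refine mul_le_mul_of_nonneg_left hm'le ?_
          have h2 : (0:ℝ) ≤ 2 := by norm_num
          exact mul_nonneg (mul_nonneg (mul_nonneg h2 hδε1) hpow0) htv0
      _ = 2 * (δ / ε) * (1 - ε ^ 2) ^ n * tv * tμ := by ring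
  exact hgoal

end Main

end FKStability

/-- Uniform exponential stability of the normalized Feynman–Kac semigroup: under the
potential ratio bound `G_p(x) ≤ δ·G_p(y)` and the kernel mutual minorization
`M_p(x,·) ≥ ε·M_p(y,·)`, for `0 ≤ s < t = s + n`,
`‖Φ_{s,t}(μ) − Φ_{s,t}(ρ)‖_tv ≤ 2(δ/ε)²(1−ε²)^{t−s}‖μ−ρ‖_tv`. -/
theorem fk_semigroup_stability
    {E : Type*} [MeasurableSpace E]
    (G : ℕ → E → ℝ) (hGm : ∀ p, Measurable (G p)) (hGpos : ∀ p x, 0 < G p x)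
    (hGb : ∀ p, ∃ C : ℝ, ∀ x, G p x ≤ C)
    (δ : ℝ) (hδ : 1 ≤ δ) (hG : ∀ p x y, G p x ≤ δ * G p y)
    (M : ℕ → Kernel E E) [∀ p, IsMarkovKernel (M p)]
    (ε : ℝ) (hε : ε ∈ Set.Ioo (0 : ℝ) 1)
    (hM : ∀ (p : ℕ) (x y : E) (A : Set E), MeasurableSet A →
      ENNReal.ofReal ε * M p y A ≤ M p x A)
    (s n : ℕ) (hn : 1 ≤ n)
    (μ ρ : Measure E) [IsProbabilityMeasure μ] [IsProbabilityMeasure ρ] :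
    tvDist (fkIter G M s n μ) (fkIter G M s n ρ) ≤
      2 * (δ / ε) ^ 2 * (1 - ε ^ 2) ^ n * tvDist μ ρ := by
  rcases isEmpty_or_nonempty E with hE | hE
  · exfalso
    have h1 : μ Set.univ = 1 := measure_univ
    rw [Set.univ_eq_empty_iff.2 hE, measure_empty] at h1
    exact zero_ne_one h1
  · haveI : Nonempty {s : Set E // MeasurableSet s} := ⟨⟨∅, MeasurableSet.empty⟩⟩
    have htv0 : 0 ≤ tvDist μ ρ := FKStability.tvDist_nonneg μ ρ
    have hδε : 1 ≤ δ / ε := by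
      rw [le_div_iff₀ hε.1]
      nlinarith [hε.2, hδ]
    have hpow0 : (0:ℝ) ≤ (1 - ε ^ 2) ^ n := pow_nonneg (by nlinarith [hε.1, hε.2]) n
    have hfac : δ / ε ≤ (δ / ε) ^ 2 := by nlinarith [hδε]
    have hb : 2 * (δ / ε) * (1 - ε ^ 2) ^ n * tvDist μ ρ
        ≤ 2 * (δ / ε) ^ 2 * (1 - ε ^ 2) ^ n * tvDist μ ρ := by
      have h2 : (0:ℝ) ≤ 2 * (1 - ε ^ 2) ^ n * tvDist μ ρ := by positivity
      calc 2 * (δ / ε) * (1 - ε ^ 2) ^ n * tvDist μ ρ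
          = (2 * (1 - ε ^ 2) ^ n * tvDist μ ρ) * (δ / ε) := by ring
        _ ≤ (2 * (1 - ε ^ 2) ^ n * tvDist μ ρ) * (δ / ε) ^ 2 :=
            mul_le_mul_of_nonneg_left hfac h2
        _ = 2 * (δ / ε) ^ 2 * (1 - ε ^ 2) ^ n * tvDist μ ρ := by ring
    have hmain : ∀ Ap : {s : Set E // MeasurableSet s},
        |(fkIter G M s n μ Ap).toReal - (fkIter G M s n ρ Ap).toReal|
          ≤ 2 * (δ / ε) ^ 2 * (1 - ε ^ 2) ^ n * tvDist μ ρ := by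
      rintro ⟨A, hA⟩
      have h1 := FKStability.fk_onesided G M (δ := δ) hGm hGpos hGb hδ hG hε hM s n μ ρ hA
      have h2 := FKStability.fk_onesided G M (δ := δ) hGm hGpos hGb hδ hG hε hM s n ρ μ hA
      rw [← FKStability.tvDist_comm μ ρ] at h2
      exact abs_sub_le_iff.2 ⟨h1.trans hb, h2.trans hb⟩
    exact ciSup_le hmain
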